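/- Let f ∈ Homeo₀(𝕋^d) with lift F, let K ⊆ 𝕋^d be a compact f-invariant set, let V ⊆ ℝ^d be a linear subspace with ρ_K(F) ⊆ v₀ + V^⊥ for some v₀ ∈ V, and let z ∈ K. (b) If sup_{n∈ℕ} ‖D_V(n,z)‖ = ∞, then 𝒜_V(z) is non-empty. (c) If sup_{n∈ℕ} D_v(n,z) = ∞ for some v ∈ V with ‖v‖ = 1, then the closure of S^+(v) intersects 𝒜_V(z). -/

import Mathlib

open Filter Topology Set
open scoped RealInnerProductSpace

noncomputable section

abbrev E (d : ℕ) : Type := EuclideanSpace ℝ (Fin d)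

/-- The integer lattice `ℤ^d` inside `ℝ^d`. -/
def intLattice (d : ℕ) : AddSubgroup (E d) where
  carrier := {x : E d | ∀ i, ∃ m : ℤ, x i = (m : ℝ)}
  zero_mem' := fun i => ⟨0, by simp⟩
  add_mem' := by
    intro a b ha hb i
    obtain ⟨m, hm⟩ := ha i
    obtain ⟨n, hn⟩ := hb i
    refine ⟨m + n, ?_⟩
    have h : (a + b) i = a i + b i := rfl
    rw [h, hm, hn]; push_cast; ring
  neg_mem' := by
    intro a ha i
    obtain ⟨m, hm⟩ := ha i
    refine ⟨-m, ?_⟩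
    have h : (-a) i = -(a i) := rfl
    rw [h, hm]; push_cast; ring

/-- The torus `𝕋^d = ℝ^d / ℤ^d`. -/
abbrev Torus (d : ℕ) : Type := E d ⧸ intLattice d

/-- The canonical projection `π : ℝ^d → 𝕋^d`. -/
def Tproj (d : ℕ) : E d → Torus d := QuotientAddGroup.mk

/-- `F` is a lift of `f`; together with `F` being a homeomorphism this encodes
`f ∈ Homeo₀(𝕋^d)` with lift `F`. -/
def IsLiftOf {d : ℕ} (F : E d ≃ₜ E d) (f : Torus d → Torus d) : Prop :=
  (∀ z : E d, Tproj d (F z) = f (Tproj d z)) ∧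
  (∀ z : E d, ∀ m ∈ intLattice d, F (z + m) = F z + m)

/-- The rotation set of `f` on `A ⊆ 𝕋^d`. -/
def rotSetOn {d : ℕ} (F : E d ≃ₜ E d) (A : Set (Torus d)) : Set (E d) :=
  {ρ | ∃ (n : ℕ → ℕ) (z : ℕ → E d), StrictMono n ∧ (∀ i, Tproj d (z i) ∈ A) ∧
      Tendsto (fun i => (n i : ℝ)⁻¹ • ((F : E d → E d)^[n i] (z i) - z i)) atTop (𝓝 ρ)}

/-- The rotation set `ρ(F)`. -/
def rotSet {d : ℕ} (F : E d ≃ₜ E d) : Set (E d) := rotSetOn F Set.univ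

/-- The deviation from the constant rotation, `D(n,z) = F^n(z) - z - nρ`. -/
def dev {d : ℕ} (F : E d ≃ₜ E d) (ρ : E d) (n : ℕ) (z : E d) : E d :=
  (F : E d → E d)^[n] z - z - (n : ℝ) • ρ

/-- The deviation parallel to `v`, `D_v(n,z) = ⟨F^n(z) - z - nρ, v⟩`. -/
def devIn {d : ℕ} (F : E d ≃ₜ E d) (ρ : E d) (v : E d) (n : ℕ) (z : E d) : ℝ :=
  ⟪dev F ρ n z, v⟫

/-- `1, ρ_1, …, ρ_d` are linearly independent over `ℚ`. -/
def TotallyIrrational {d : ℕ} (ρ : E d) : Prop :=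
  ∀ (k : Fin d → ℤ) (m : ℤ), (∑ i, (k i : ℝ) * ρ i) = (m : ℝ) → ∀ i, k i = 0

/-- `f` has bounded mean motion (w.r.t. the rotation vector `ρ`). -/
def BoundedMeanMotion {d : ℕ} (F : E d ≃ₜ E d) (ρ : E d) : Prop :=
  ∃ C : ℝ, ∀ (n : ℕ) (z : E d), ‖dev F ρ n z‖ ≤ C

/-- `f` is non-wandering: no nonempty open set is wandering. -/
def NonWandering {d : ℕ} (f : Torus d → Torus d) : Prop :=
  ∀ U : Set (Torus d), IsOpen U → U.Nonempty → ∃ n : ℕ, 0 < n ∧ (U ∩ f^[n] '' U).Nonempty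

/-- Projection of the deviation vector to the linear subspace `V`. -/
def devProj {d : ℕ} (F : E d ≃ₜ E d) (V : Submodule ℝ (E d)) (ρ : E d) (n : ℕ) (z : E d) : E d :=
  (Submodule.orthogonalProjectionOnto V (dev F ρ n z) : E d)

/-- The set of asymptotic directions `𝒜_V(z)`. -/
def asympDirs {d : ℕ} (F : E d ≃ₜ E d) (V : Submodule ℝ (E d)) (ρ : E d) (z : E d) :
    Set (E d) :=
  {v | ‖v‖ = 1 ∧ ∀ ε > (0 : ℝ), ∀ r > (0 : ℝ), ∃ n : ℕ,
      r < ‖devProj F V ρ n z‖ ∧ ‖(‖devProj F V ρ n z‖)⁻¹ • devProj F V ρ n z - v‖ < ε}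

/-- `S^+(v) = {w ∈ 𝕊^{d-1} : ⟨v,w⟩ > 0}`. -/
def Splus {d : ℕ} (v : E d) : Set (E d) := {w | ‖w‖ = 1 ∧ 0 < ⟪v, w⟫}

/-- `z` is `ε`-Lyapunov stable for `h`. -/
def LyapStable {X : Type*} [PseudoMetricSpace X] (h : X → X) (ε : ℝ) (z : X) : Prop :=
  ∃ δ > (0 : ℝ), ∀ n : ℕ, ∀ w, dist z w < δ → dist (h^[n] z) (h^[n] w) < ε

/-- `ε_f`, the largest `ε` such that `ε`-close points have `1/2`-close images. -/
def epsF {d : ℕ} (f : Torus d → Torus d) : ℝ :=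
  sSup {ε : ℝ | 0 < ε ∧ ∀ z z' : Torus d, dist z z' < ε → dist (f z) (f z') < 1 / 2}

/-- `ℤ`-indexed iterates of a homeomorphism. -/
def iterZ {d : ℕ} (F : E d ≃ₜ E d) : ℤ → E d → E d
  | .ofNat n => (F : E d → E d)^[n]
  | .negSucc n => (F.symm : E d → E d)^[n + 1]

/-- `ℤ`-indexed deviations parallel to `v`. -/
def devZIn {d : ℕ} (F : E d ≃ₜ E d) (ρ v : E d) (n : ℤ) (z : E d) : ℝ :=
  ⟪iterZ F n z - z - (n : ℝ) • ρ, v⟫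


/-- Key lemma: if the projected deviations are unbounded and their normalizations lie in a
set `S`, then `closure S` meets `𝒜_V(z)`. -/
lemma key_asymp {d : ℕ} (F : E d ≃ₜ E d) (V : Submodule ℝ (E d)) (ρ z : E d) (S : Set (E d))
    (h : ∀ C : ℝ, ∃ n : ℕ, C < ‖devProj F V ρ n z‖ ∧
      (‖devProj F V ρ n z‖)⁻¹ • devProj F V ρ n z ∈ S) :
    (closure S ∩ asympDirs F V ρ z).Nonempty := by
  choose n hn hS using fun k : ℕ => h k
  set u : ℕ → E d := fun k => (‖devProj F V ρ (n k) z‖)⁻¹ • devProj F V ρ (n k) z with hu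
  have hnorm : ∀ k, 0 < ‖devProj F V ρ (n k) z‖ := fun k =>
    lt_of_le_of_lt (Nat.cast_nonneg k) (hn k)
  have hu1 : ∀ k, ‖u k‖ = 1 := by
    intro k
    rw [hu]
    simp [norm_smul, abs_of_pos (inv_pos.mpr (hnorm k)), inv_mul_cancel₀ (hnorm k).ne']
  have husph : ∀ k, u k ∈ Metric.sphere (0 : E d) 1 := by
    intro k; simpa [mem_sphere_iff_norm] using hu1 k
  obtain ⟨w, hwmem, φ, hφ, hconv⟩ := (isCompact_sphere (0 : E d) 1).tendsto_subseq husph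
  refine ⟨w, ?_, ?_⟩
  · exact mem_closure_of_tendsto hconv (Eventually.of_forall fun k => hS (φ k))
  · have hw1 : ‖w‖ = 1 := by simpa [mem_sphere_iff_norm] using hwmem
    refine ⟨hw1, fun ε hε r hr => ?_⟩
    obtain ⟨k₀, hk₀⟩ := (Metric.tendsto_atTop.mp hconv) ε hε
    set k := max k₀ ⌈r⌉₊ with hk
    refine ⟨n (φ k), ?_, ?_⟩
    · have h1 : (r : ℝ) ≤ (⌈r⌉₊ : ℝ) := Nat.le_ceil r
      have h2 : (⌈r⌉₊ : ℝ) ≤ (φ k : ℝ) := by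
        exact_mod_cast le_trans (le_max_right k₀ ⌈r⌉₊) hφ.le_apply
      exact lt_of_le_of_lt (h1.trans h2) (hn (φ k))
    · have := hk₀ k (le_max_left _ _)
      simpa [hu, dist_eq_norm] using this

/-- **Lemma (asymptotic directions, (b) and (c)).** If `ρ_K(F) ⊆ v₀ + V^⊥` with `v₀ ∈ V`
and `z ∈ K`, then: (b) if `sup_{n∈ℕ} ‖D_V(n,z)‖ = ∞` then `𝒜_V(z) ≠ ∅`; (c) if
`sup_{n∈ℕ} D_v(n,z) = ∞` for some unit vector `v ∈ V`, then
`closure (S^+(v)) ∩ 𝒜_V(z) ≠ ∅`. -/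
theorem asympDirs_nonempty_of_unbounded {d : ℕ} (f : Torus d → Torus d)
    (F : E d ≃ₜ E d) (hlift : IsLiftOf F f) (K : Set (Torus d)) (hKc : IsCompact K)
    (hKinv : f '' K = K) (V : Submodule ℝ (E d)) (v₀ : E d) (hv₀ : v₀ ∈ V)
    (hrot : ∀ ρ' ∈ rotSetOn F K, ρ' - v₀ ∈ Vᗮ)
    (z : E d) (hz : Tproj d z ∈ K) :
    ((∀ C : ℝ, ∃ n : ℕ, C < ‖devProj F V v₀ n z‖) → (asympDirs F V v₀ z).Nonempty) ∧
    (∀ v : E d, v ∈ V → ‖v‖ = 1 → (∀ C : ℝ, ∃ n : ℕ, C < devIn F v₀ v n z) →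
      (closure (Splus v) ∩ asympDirs F V v₀ z).Nonempty) := by
  constructor
  · intro h
    obtain ⟨w, _, hw⟩ := key_asymp F V v₀ z Set.univ (fun C => by
      obtain ⟨n, hn⟩ := h C; exact ⟨n, hn, trivial⟩)
    exact ⟨w, hw⟩
  · intro v hvV hv1 h
    have hdevIn : ∀ n : ℕ, devIn F v₀ v n z = ⟪devProj F V v₀ n z, v⟫ := by
      intro n
      have hmem := Submodule.sub_starProjection_mem_orthogonal (K := V) (dev F v₀ n z)
      have h0 : ⟪dev F v₀ n z - devProj F V v₀ n z, v⟫ = 0 := by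
        rw [real_inner_comm]
        exact (Submodule.mem_orthogonal V _).mp hmem v hvV
      have h1 : ⟪dev F v₀ n z, v⟫ - ⟪devProj F V v₀ n z, v⟫ = 0 := by
        rw [← inner_sub_left]; exact h0
      have h2 : devIn F v₀ v n z = ⟪dev F v₀ n z, v⟫ := rfl
      linarith
    apply key_asymp F V v₀ z (Splus v)
    intro C
    obtain ⟨n, hn⟩ := h (max C 0)
    have hpos : 0 < devIn F v₀ v n z := lt_of_le_of_lt (le_max_right C 0) hn
    have hle : devIn F v₀ v n z ≤ ‖devProj F V v₀ n z‖ := by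
      rw [hdevIn]
      calc ⟪devProj F V v₀ n z, v⟫ ≤ ‖devProj F V v₀ n z‖ * ‖v‖ := real_inner_le_norm _ _
        _ = ‖devProj F V v₀ n z‖ := by rw [hv1, mul_one]
    have hnpos : 0 < ‖devProj F V v₀ n z‖ := lt_of_lt_of_le hpos hle
    refine ⟨n, lt_of_le_of_lt (le_max_left C 0) (lt_of_lt_of_le hn hle), ?_, ?_⟩
    · simp [norm_smul, abs_of_pos (inv_pos.mpr hnpos), inv_mul_cancel₀ hnpos.ne']
    · rw [real_inner_smul_right]
      exact mul_pos (inv_pos.mpr hnpos)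
        (by rw [real_inner_comm, ← hdevIn]; exact hpos)

end
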